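/- For every finite multitree T in which every vertex has at most two out-neighbors, there exist a finite multitree Q in which every vertex has at most two out-neighbors and which has at most 2·|T| vertices, a map q from the vertices of T to the vertices of Q, and a labeling λ from the vertices of Q to the leaves of T, such that for every vertex n of T, the restriction of λ to the set of vertices of Q reachable from q(n) (including q(n) itself) is a bijection onto the set of leaves of T reachable from n (including n itself if n is a leaf). -/

import Mathlib

set_option linter.unusedVariables false
set_option maxHeartbeats 1000000

/-- `IsTrail E a l b`: the list `l` of vertices (after `a`) forms a directed path
from `a` to `b` following edges of `E`; distinct lists are distinct directed paths. -/
def IsTrail {α : Type*} (E : α → α → Prop) : α → List α → α → Prop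
  | a, [], b => a = b
  | a, x :: l, b => E a x ∧ IsTrail E x l b

/-- A directed graph is a multitree if it is acyclic and, for every pair of distinct
vertices, there is at most one directed path from the first to the second. -/
def IsMultitree {α : Type*} (E : α → α → Prop) : Prop :=
  (∀ a : α, ¬ Relation.TransGen E a a) ∧
  ∀ a b : α, a ≠ b → ∀ l1 l2 : List α, IsTrail E a l1 b → IsTrail E a l2 b → l1 = l2

/-- A leaf of a directed graph: a vertex with no outgoing edges. -/
def IsLeafVert {α : Type*} (E : α → α → Prop) (v : α) : Prop :=
  ∀ w : α, ¬ E v w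

open Relation Set Classical

namespace MT

/- ### Generic lemmas about trails and reach sets -/

section Generic
variable {β : Type*} {F : β → β → Prop}

lemma trail_of_rtg {a b : β} (h : ReflTransGen F a b) : ∃ l, IsTrail F a l b := by
  induction h using ReflTransGen.head_induction_on with
  | refl => exact ⟨[], rfl⟩
  | head hstep _ ih =>
    obtain ⟨l, hl⟩ := ih
    exact ⟨_ :: l, hstep, hl⟩

lemma rtg_of_trail {b : β} {l : List β} : ∀ {a : β}, IsTrail F a l b → ReflTransGen F a b := by
  induction l with
  | nil => intro a h; exact h ▸ ReflTransGen.refl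
  | cons x t ih => intro a h; exact ReflTransGen.head h.1 (ih h.2)

lemma tg_of_trail_cons {a b x : β} {t : List β} (h : IsTrail F a (x :: t) b) :
    TransGen F a b :=
  TransGen.head' h.1 (rtg_of_trail h.2)

/-- A relation which is acyclic and in which distinct successors of any vertex have
disjoint reach sets is a multitree. -/
lemma multitree_of (hac : ∀ a, ¬ TransGen F a a)
    (hdisj : ∀ x y1 y2, F x y1 → F x y2 → y1 ≠ y2 →
      ∀ b, ReflTransGen F y1 b → ReflTransGen F y2 b → False) :
    IsMultitree F := by
  refine ⟨hac, ?_⟩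
  intro a b hne l1
  induction l1 generalizing a with
  | nil =>
    intro l2 h1 h2
    exact absurd h1 hne
  | cons x1 t1 ih =>
    rintro (_ | ⟨x2, t2⟩) h1 h2
    · exact absurd h2 hne
    · obtain rfl : x1 = x2 := by
        by_contra hx
        exact hdisj a x1 x2 h1.1 h2.1 hx b (rtg_of_trail h1.2) (rtg_of_trail h2.2)
      by_cases hxb : x1 = b
      · subst hxb
        have htnil : ∀ t : List β, IsTrail F x1 t x1 → t = [] := by
          rintro (_ | ⟨y, t⟩) h
          · rfl
          · exact absurd (tg_of_trail_cons h) (hac x1)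
        rw [htnil t1 h1.2, htnil t2 h2.2]
      · rw [ih x1 hxb t2 h1.2 h2.2]

lemma reach_none {x : β} (h : ∀ y, ¬ F x y) : {y | ReflTransGen F x y} = {x} := by
  ext z
  simp only [mem_setOf_eq, mem_singleton_iff]
  constructor
  · intro hz
    rcases hz.cases_head with h' | ⟨c, hc, -⟩
    · exact h'.symm
    · exact absurd hc (h c)
  · rintro rfl; exact ReflTransGen.refl

lemma reach_single {x a : β} (h : ∀ y, F x y ↔ y = a) :
    {y | ReflTransGen F x y} = insert x {y | ReflTransGen F a y} := by
  ext z
  simp only [mem_setOf_eq, mem_insert_iff]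
  constructor
  · intro hz
    rcases hz.cases_head with h' | ⟨c, hc, hcr⟩
    · exact Or.inl h'.symm
    · exact Or.inr (((h c).1 hc) ▸ hcr)
  · rintro (rfl | hz)
    · exact ReflTransGen.refl
    · exact ReflTransGen.head ((h a).2 rfl) hz

lemma reach_pair {x a b : β} (h : ∀ y, F x y ↔ (y = a ∨ y = b)) :
    {y | ReflTransGen F x y} =
      insert x ({y | ReflTransGen F a y} ∪ {y | ReflTransGen F b y}) := by
  ext z
  simp only [mem_setOf_eq, mem_insert_iff, mem_union]
  constructor
  · intro hz
    rcases hz.cases_head with h' | ⟨c, hc, hcr⟩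
    · exact Or.inl h'.symm
    · rcases (h c).1 hc with rfl | rfl
      · exact Or.inr (Or.inl hcr)
      · exact Or.inr (Or.inr hcr)
  · rintro (rfl | hz | hz)
    · exact ReflTransGen.refl
    · exact ReflTransGen.head ((h a).2 (Or.inl rfl)) hz
    · exact ReflTransGen.head ((h b).2 (Or.inr rfl)) hz

lemma bijOn_union_disjoint {γ : Type*} {f : β → γ} {s1 s2 : Set β} {t1 t2 : Set γ}
    (h1 : BijOn f s1 t1) (h2 : BijOn f s2 t2) (hd : Disjoint t1 t2) :
    BijOn f (s1 ∪ s2) (t1 ∪ t2) := by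
  refine h1.union h2 ?_
  rintro x (hx | hx) y (hy | hy) hxy
  · exact h1.injOn hx hy hxy
  · exact ((disjoint_left.1 hd (h1.mapsTo hx) (hxy ▸ h2.mapsTo hy))).elim
  · exact ((disjoint_left.1 hd (hxy ▸ h1.mapsTo hy) (h2.mapsTo hx))).elim
  · exact h2.injOn hx hy hxy

lemma bijOn_insert {γ : Type*} {f : β → γ} {s : Set β} {t : Set γ} {a : β}
    (h : BijOn f s t) (ha : f a ∉ t) : BijOn f (insert a s) (insert (f a) t) :=
  h.insert ha

end Generic

section SetIds
variable {γ : Type*}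

lemma idA {s t : Set γ} {w : γ} (hw : w ∈ s) : insert w (t ∪ (s \ {w})) = s ∪ t := by
  ext v
  by_cases hv : v = w
  · simp [hv, hw]
  · simp [hv]; tauto

lemma idB1 {s t : Set γ} {w1 w2 : γ} (h1 : w1 ∈ s) (h2 : w2 ∉ s) (h3 : w2 ∈ t) :
    insert w1 ((s \ {w1}) ∪ (t \ {w2})) = (s ∪ t) \ {w2} := by
  have hne : w1 ≠ w2 := fun h => h2 (h ▸ h1)
  ext v
  by_cases hv : v = w1
  · simp [hv, h1, hne]
  · by_cases hv2 : v = w2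
    · simp [hv, hv2, h2, hne.symm]
    · simp only [Set.mem_insert_iff, Set.mem_union, Set.mem_diff, Set.mem_singleton_iff, hv, hv2]
      tauto

lemma idB2 {s : Set γ} {w1 w2 : γ} (h1 : w1 ∈ s) (h2 : w2 ∉ s) :
    insert w1 (s \ {w1}) = (s ∪ {w2}) \ {w2} := by
  have hne : w1 ≠ w2 := fun h => h2 (h ▸ h1)
  ext v
  by_cases hv : v = w1
  · simp [hv, h1, hne]
  · by_cases hv2 : v = w2
    · simp [hv, hv2, h2, hne.symm]
    · simp [hv, hv2]

lemma idB3 {t : Set γ} {w1 w2 : γ} (h1 : w1 ≠ w2) :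
    insert w1 (t \ {w2}) = (({w1} : Set γ) ∪ t) \ {w2} := by
  ext v
  by_cases hv : v = w1
  · simp [hv, h1]
  · simp [hv]

lemma idB4 {w1 w2 : γ} (h1 : w1 ≠ w2) :
    ({w1} : Set γ) = ((({w1} : Set γ) ∪ {w2})) \ {w2} := by
  ext v
  by_cases hv : v = w1
  · simp [hv, h1]
  · by_cases hv2 : v = w2 <;> simp [hv, hv2, h1.symm]

end SetIds


section Transport
variable {β γ : Type*} (F : γ → γ → Prop) (e : β ≃ γ)

lemma rtg_comap {a b : β} :
    ReflTransGen (fun i j => F (e i) (e j)) a b ↔ ReflTransGen F (e a) (e b) := by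
  constructor
  · intro h
    exact ReflTransGen.lift e (fun _ _ h => h) _ _ h
  · intro h
    have := ReflTransGen.lift (r := F) (p := fun i j => F (e i) (e j)) e.symm
      (fun x y hxy => show F (e (e.symm x)) (e (e.symm y)) by simpa) _ _ h
    simpa [Function.onFun] using this

lemma isTrail_comap {b : β} {l : List β} : ∀ {a : β},
    IsTrail (fun i j => F (e i) (e j)) a l b ↔ IsTrail F (e a) (l.map e) (e b) := by
  induction l with
  | nil =>
    intro a
    simp only [IsTrail, List.map_nil]
    exact ⟨fun h => congrArg e h, fun h => e.injective h⟩
  | cons x t ih =>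
    intro a
    simp only [IsTrail, List.map_cons]
    exact and_congr Iff.rfl ih

lemma multitree_comap (h : IsMultitree F) : IsMultitree (fun i j => F (e i) (e j)) := by
  constructor
  · intro a ha
    exact h.1 (e a) (Relation.TransGen.lift e (fun _ _ h => h) _ _ ha)
  · intro a b hne l1 l2 h1 h2
    have := h.2 (e a) (e b) (fun hh => hne (e.injective hh)) (l1.map e) (l2.map e)
      ((isTrail_comap F e).1 h1) ((isTrail_comap F e).1 h2)
    exact List.map_injective_iff.2 e.injective this

lemma ncard_comap (s : Set γ) : (e ⁻¹' s).ncard = s.ncard := by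
  calc (e ⁻¹' s).ncard = (e '' (e ⁻¹' s)).ncard :=
        (Set.ncard_image_of_injective _ e.injective).symm
    _ = s.ncard := by rw [Equiv.image_preimage]

lemma bijOn_comap {δ : Type*} {f : γ → δ} {s : Set γ} {t : Set δ} (h : BijOn f s t) :
    BijOn (fun i => f (e i)) (e ⁻¹' s) t := by
  refine h.comp (⟨fun x hx => hx, e.injective.injOn, fun y hy => ?_⟩ : BijOn e (e ⁻¹' s) s)
  exact ⟨e.symm y, by simp [hy], by simp⟩

end Transport

end MT

namespace MT

section Constr

variable {V : Type*} (E : V → V → Prop)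

/-- leaves reachable from n -/
def L (n : V) : Set V := {v | IsLeafVert E v ∧ ReflTransGen E n v}
noncomputable def c1 (n : V) : V := if h : {w | E n w}.Nonempty then h.some else n
def Bin (n : V) : Prop := ({w | E n w} \ {c1 E n}).Nonempty
noncomputable def c2 (n : V) : V := if h : Bin E n then h.some else n

variable {E}

lemma hc1 {n : V} (h : {w | E n w}.Nonempty) : E n (c1 E n) := by
  rw [c1, dif_pos h]; exact h.some_mem

lemma hc2 {n : V} (h : Bin E n) : E n (c2 E n) ∧ c2 E n ≠ c1 E n := by
  rw [c2, dif_pos h]; have := h.some_mem; exact ⟨this.1, this.2⟩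

lemma bin_nonempty {n : V} (h : Bin E n) : {w | E n w}.Nonempty := ⟨_, (hc2 h).1⟩

lemma nonempty_iff_not_leaf {n : V} : {w | E n w}.Nonempty ↔ ¬ IsLeafVert E n := by
  simp [IsLeafVert, Set.Nonempty]

lemma child_eq [Finite V] (hdeg : ∀ v : V, {w : V | E v w}.ncard ≤ 2) {n x : V}
    (h : E n x) : x = c1 E n ∨ (Bin E n ∧ x = c2 E n) := by
  by_cases h1 : x = c1 E n
  · exact Or.inl h1
  have hb : Bin E n := ⟨x, h, h1⟩
  right
  refine ⟨hb, ?_⟩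
  by_contra h2
  have hc2' := hc2 hb
  have hsub : ({c1 E n, c2 E n, x} : Set V) ⊆ {w | E n w} := by
    intro y hy
    rcases hy with rfl | rfl | rfl
    · exact hc1 (bin_nonempty hb)
    · exact hc2'.1
    · exact h
  have h3 : ({c1 E n, c2 E n, x} : Set V).ncard = 3 := by
    rw [Set.ncard_insert_of_notMem
        (by simp [Ne.symm hc2'.2, Ne.symm h1] : c1 E n ∉ ({c2 E n, x} : Set V)) (Set.toFinite _),
      Set.ncard_insert_of_notMem (by simp [Ne.symm h2]) (Set.toFinite _), Set.ncard_singleton]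
  have h4 := Set.ncard_le_ncard hsub (Set.toFinite _)
  have h5 := hdeg n
  omega

lemma L_mono {n c : V} (h : E n c) : L E c ⊆ L E n :=
  fun v hv => ⟨hv.1, ReflTransGen.head h hv.2⟩

lemma L_leaf {n : V} (h : IsLeafVert E n) : L E n = {n} := by
  ext v
  constructor
  · rintro ⟨hv, hr⟩
    rcases hr.cases_head with rfl | ⟨c, hc, -⟩
    · rfl
    · exact absurd hc (h c)
  · rintro rfl
    exact ⟨h, ReflTransGen.refl⟩

lemma L_step [Finite V] (hdeg : ∀ v : V, {w : V | E v w}.ncard ≤ 2) {n : V}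
    (h : ¬ IsLeafVert E n) :
    L E n = L E (c1 E n) ∪ (if Bin E n then L E (c2 E n) else ∅) := by
  ext v
  constructor
  · rintro ⟨hv, hr⟩
    rcases hr.cases_head with rfl | ⟨c, hc, hcr⟩
    · exact absurd hv h
    · rcases child_eq hdeg hc with rfl | ⟨hb, rfl⟩
      · exact Or.inl ⟨hv, hcr⟩
      · simp only [if_pos hb]
        exact Or.inr ⟨hv, hcr⟩
  · intro hv
    rcases hv with hv | hv
    · exact L_mono (hc1 (nonempty_iff_not_leaf.2 h)) hv
    · split at hv
      · exact L_mono (hc2 ‹_›).1 hv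
      · exact absurd hv (by simp)

lemma L_disj [Finite V] (hMT : IsMultitree E) {n : V} (hb : Bin E n) :
    Disjoint (L E (c1 E n)) (L E (c2 E n)) := by
  rw [Set.disjoint_left]
  rintro v ⟨hv, h1⟩ ⟨-, h2⟩
  obtain ⟨l1, hl1⟩ := trail_of_rtg h1
  obtain ⟨l2, hl2⟩ := trail_of_rtg h2
  have hne : n ≠ v := by
    rintro rfl
    exact hv _ (hc1 (bin_nonempty hb))
  have := hMT.2 n v hne (c1 E n :: l1) (c2 E n :: l2)
    ⟨hc1 (bin_nonempty hb), hl1⟩ ⟨(hc2 hb).1, hl2⟩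
  exact (hc2 hb).2 (by injection this.symm)

variable (E)
variable (hwf : WellFounded (fun a b : V => E b a))

noncomputable def wit : V → V :=
  hwf.fix (fun n IH =>
    if h : Bin E n then IH (c2 E n) (hc2 h).1
    else if h1 : {w | E n w}.Nonempty then IH (c1 E n) (hc1 h1)
    else n)

lemma wit_eq (n : V) : wit E hwf n =
    (if h : Bin E n then wit E hwf (c2 E n)
     else if h1 : {w | E n w}.Nonempty then wit E hwf (c1 E n) else n) := by
  rw [wit, WellFounded.fix_eq]

noncomputable def ent : V → V × Bool :=
  hwf.fix (fun n IH =>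
    if h : Bin E n then (n, false)
    else if h1 : {w | E n w}.Nonempty then IH (c1 E n) (hc1 h1)
    else (n, false))

lemma ent_eq (n : V) : ent E hwf n =
    (if h : Bin E n then (n, false)
     else if h1 : {w | E n w}.Nonempty then ent E hwf (c1 E n) else (n, false)) := by
  rw [ent, WellFounded.fix_eq]

noncomputable def ent' : V → V × Bool :=
  hwf.fix (fun n IH =>
    if h : Bin E n then (n, true)
    else if h1 : {w | E n w}.Nonempty then IH (c1 E n) (hc1 h1)
    else (n, true))

lemma ent'_eq (n : V) : ent' E hwf n =
    (if h : Bin E n then (n, true)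
     else if h1 : {w | E n w}.Nonempty then ent' E hwf (c1 E n) else (n, true)) := by
  rw [ent', WellFounded.fix_eq]

def many (n : V) : Prop := 2 ≤ (L E n).ncard

noncomputable def lab (x : V × Bool) : V :=
  if Bin E x.1 then wit E hwf (c1 E x.1) else wit E hwf x.1

def Fq (x y : V × Bool) : Prop :=
  Bin E x.1 ∧
    cond x.2
      ((many E (c1 E x.1) ∧ y = ent' E hwf (c1 E x.1)) ∨
       (many E (c2 E x.1) ∧ y = ent' E hwf (c2 E x.1)))
      (y = ent E hwf (c2 E x.1) ∨
       (many E (c1 E x.1) ∧ y = ent' E hwf (c1 E x.1)))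

variable {E}

lemma wit_mem [Finite V] (hdeg : ∀ v : V, {w : V | E v w}.ncard ≤ 2) (n : V) :
    wit E hwf n ∈ L E n := by
  induction n using hwf.induction with
  | _ n IH =>
    rw [wit_eq]
    split
    · next h => exact L_mono (hc2 h).1 (IH _ (hc2 h).1)
    · next h =>
      split
      · next h1 => exact L_mono (hc1 h1) (IH _ (hc1 h1))
      · next h1 =>
        rw [L_leaf (not_not.1 (mt nonempty_iff_not_leaf.2 h1))]
        rfl

lemma L_nonempty [Finite V] (hwf : WellFounded (fun a b : V => E b a)) (hdeg : ∀ v : V, {w : V | E v w}.ncard ≤ 2) (n : V) :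
    (L E n).Nonempty := ⟨_, wit_mem hwf hdeg n⟩


lemma not_many_eq [Finite V] (hdeg : ∀ v : V, {w : V | E v w}.ncard ≤ 2) {n : V}
    (h : ¬ many E n) : L E n = {wit E hwf n} := by
  rw [many, not_le] at h
  have h1 : 0 < (L E n).ncard := (Set.ncard_pos (Set.toFinite _)).2 (L_nonempty hwf hdeg n)
  have : (L E n).ncard = 1 := by omega
  obtain ⟨a, ha⟩ := Set.ncard_eq_one.1 this
  have := wit_mem hwf hdeg n
  rw [ha] at this ⊢
  simp_all

lemma ent_fst (n : V) : ReflTransGen E n (ent E hwf n).1 := by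
  induction n using hwf.induction with
  | _ n IH =>
    rw [ent_eq]
    split
    · exact ReflTransGen.refl
    · split
      · next h1 => exact ReflTransGen.head (hc1 h1) (IH _ (hc1 h1))
      · exact ReflTransGen.refl

lemma ent'_fst (n : V) : ReflTransGen E n (ent' E hwf n).1 := by
  induction n using hwf.induction with
  | _ n IH =>
    rw [ent'_eq]
    split
    · exact ReflTransGen.refl
    · split
      · next h1 => exact ReflTransGen.head (hc1 h1) (IH _ (hc1 h1))
      · exact ReflTransGen.refl

lemma Fq_fst {x y : V × Bool} (h : Fq E hwf x y) : TransGen E x.1 y.1 := by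
  obtain ⟨hb, h2⟩ := h
  have step : ∀ c : V, E x.1 c → (y = ent E hwf c ∨ y = ent' E hwf c) → TransGen E x.1 y.1 := by
    rintro c hc (rfl | rfl)
    · exact TransGen.head' hc (ent_fst hwf c)
    · exact TransGen.head' hc (ent'_fst hwf c)
  rcases hx2 : x.2 with _ | _ <;> rw [hx2] at h2
  · rcases h2 with rfl | ⟨-, rfl⟩
    · exact step _ (hc2 hb).1 (Or.inl rfl)
    · exact step _ (hc1 (bin_nonempty hb)) (Or.inr rfl)
  · rcases h2 with ⟨-, rfl⟩ | ⟨-, rfl⟩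
    · exact step _ (hc1 (bin_nonempty hb)) (Or.inr rfl)
    · exact step _ (hc2 hb).1 (Or.inr rfl)

lemma Fq_acyc (hMT : IsMultitree E) : ∀ a, ¬ TransGen (Fq E hwf) a a := by
  intro a ha
  have : ∀ x y : V × Bool, TransGen (Fq E hwf) x y → TransGen E x.1 y.1 := by
    intro x y h
    induction h with
    | single h => exact Fq_fst hwf h
    | tail _ h ih => exact ih.trans (Fq_fst hwf h)
  exact hMT.1 a.1 (this a a ha)

theorem main [Finite V] (hMT : IsMultitree E) (hdeg : ∀ v : V, {w : V | E v w}.ncard ≤ 2)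
    (n : V) :
    BijOn (lab E hwf) {x | ReflTransGen (Fq E hwf) (ent E hwf n) x} (L E n) ∧
      (many E n →
        BijOn (lab E hwf) {x | ReflTransGen (Fq E hwf) (ent' E hwf n) x}
          (L E n \ {wit E hwf n})) := by
  induction n using hwf.induction with
  | _ n IH =>
  by_cases hb : Bin E n
  · have Ea : E n (c1 E n) := hc1 (bin_nonempty hb)
    have Eb : E n (c2 E n) := (hc2 hb).1
    obtain ⟨IHa1, IHa2⟩ := IH _ Ea
    obtain ⟨IHb1, IHb2⟩ := IH _ Eb
    have hLn : L E n = L E (c1 E n) ∪ L E (c2 E n) := by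
      rw [L_step hdeg (nonempty_iff_not_leaf.1 (bin_nonempty hb)), if_pos hb]
    have hdisj := L_disj hMT hb
    have hwitA := wit_mem hwf hdeg (c1 E n)
    have hwitB := wit_mem hwf hdeg (c2 E n)
    have hAB : wit E hwf (c1 E n) ≠ wit E hwf (c2 E n) := fun h =>
      disjoint_left.1 hdisj hwitA (h ▸ hwitB)
    have hBnA : wit E hwf (c2 E n) ∉ L E (c1 E n) := fun h => disjoint_left.1 hdisj h hwitB
    have hent : ent E hwf n = (n, false) := by rw [ent_eq, dif_pos hb]
    have hent' : ent' E hwf n = (n, true) := by rw [ent'_eq, dif_pos hb]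
    have hwitn : wit E hwf n = wit E hwf (c2 E n) := by rw [wit_eq, dif_pos hb]
    have hlabf : lab E hwf (n, false) = wit E hwf (c1 E n) := by simp [lab, hb]
    have hlabt : lab E hwf (n, true) = wit E hwf (c1 E n) := by simp [lab, hb]
    constructor
    · rw [hent]
      by_cases hma : many E (c1 E n)
      · have hsucc : ∀ y, Fq E hwf (n, false) y ↔
            (y = ent E hwf (c2 E n) ∨ y = ent' E hwf (c1 E n)) := by
          intro y
          simp only [Fq, cond_false]
          constructor
          · rintro ⟨-, h | ⟨-, h⟩⟩
            exacts [Or.inl h, Or.inr h]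
          · rintro (h | h)
            exacts [⟨hb, Or.inl h⟩, ⟨hb, Or.inr ⟨hma, h⟩⟩]
        rw [reach_pair hsucc]
        have hd2 : Disjoint (L E (c2 E n)) (L E (c1 E n) \ {wit E hwf (c1 E n)}) :=
          hdisj.symm.mono_right diff_subset
        have h1 := bijOn_insert (bijOn_union_disjoint IHb1 (IHa2 hma) hd2) (by
          rw [hlabf]
          rintro (h | h)
          · exact disjoint_left.1 hdisj hwitA h
          · exact h.2 rfl)
        rw [hlabf, idA hwitA] at h1
        rw [hLn]
        exact h1
      · have hsucc : ∀ y, Fq E hwf (n, false) y ↔ y = ent E hwf (c2 E n) := by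
          intro y
          simp only [Fq, cond_false]
          constructor
          · rintro ⟨-, h | ⟨hm, -⟩⟩
            exacts [h, absurd hm hma]
          · intro h; exact ⟨hb, Or.inl h⟩
        rw [reach_single hsucc]
        have h1 := bijOn_insert IHb1 (by
          rw [hlabf]; exact fun h => disjoint_left.1 hdisj hwitA h)
        rw [hlabf] at h1
        rw [hLn, not_many_eq hwf hdeg hma, Set.singleton_union]
        exact h1
    · intro hmn
      rw [hent', hwitn]
      by_cases hma : many E (c1 E n) <;> by_cases hmb : many E (c2 E n)
      · have hsucc : ∀ y, Fq E hwf (n, true) y ↔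
            (y = ent' E hwf (c1 E n) ∨ y = ent' E hwf (c2 E n)) := by
          intro y
          simp only [Fq, cond_true]
          constructor
          · rintro ⟨-, ⟨-, h⟩ | ⟨-, h⟩⟩
            exacts [Or.inl h, Or.inr h]
          · rintro (h | h)
            exacts [⟨hb, Or.inl ⟨hma, h⟩⟩, ⟨hb, Or.inr ⟨hmb, h⟩⟩]
        rw [reach_pair hsucc]
        have hd2 : Disjoint (L E (c1 E n) \ {wit E hwf (c1 E n)})
            (L E (c2 E n) \ {wit E hwf (c2 E n)}) := hdisj.mono diff_subset diff_subset
        have h1 := bijOn_insert (bijOn_union_disjoint (IHa2 hma) (IHb2 hmb) hd2) (by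
          rw [hlabt]
          rintro (h | h)
          · exact h.2 rfl
          · exact disjoint_left.1 hdisj hwitA h.1)
        rw [hlabt, idB1 hwitA hBnA hwitB] at h1
        rw [hLn]
        exact h1
      · have hsucc : ∀ y, Fq E hwf (n, true) y ↔ y = ent' E hwf (c1 E n) := by
          intro y
          simp only [Fq, cond_true]
          constructor
          · rintro ⟨-, ⟨-, h⟩ | ⟨hm, -⟩⟩
            exacts [h, absurd hm hmb]
          · intro h; exact ⟨hb, Or.inl ⟨hma, h⟩⟩
        rw [reach_single hsucc]
        have h1 := bijOn_insert (IHa2 hma) (by rw [hlabt]; exact fun h => h.2 rfl)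
        rw [hlabt, idB2 hwitA hBnA] at h1
        rw [hLn, not_many_eq hwf hdeg hmb]
        exact h1
      · have hsucc : ∀ y, Fq E hwf (n, true) y ↔ y = ent' E hwf (c2 E n) := by
          intro y
          simp only [Fq, cond_true]
          constructor
          · rintro ⟨-, ⟨hm, -⟩ | ⟨-, h⟩⟩
            exacts [absurd hm hma, h]
          · intro h; exact ⟨hb, Or.inr ⟨hmb, h⟩⟩
        rw [reach_single hsucc]
        have h1 := bijOn_insert (IHb2 hmb) (by
          rw [hlabt]; rintro ⟨h, -⟩; exact disjoint_left.1 hdisj hwitA h)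
        rw [hlabt, idB3 hAB] at h1
        rw [hLn, not_many_eq hwf hdeg hma]
        exact h1
      · have hsucc : ∀ y, ¬ Fq E hwf (n, true) y := by
          rintro y ⟨-, ⟨hm, -⟩ | ⟨hm, -⟩⟩
          exacts [hma hm, hmb hm]
        rw [reach_none hsucc]
        rw [hLn, not_many_eq hwf hdeg hma, not_many_eq hwf hdeg hmb, ← idB4 hAB,
          bijOn_singleton]
        exact hlabt
  · by_cases h1 : {w | E n w}.Nonempty
    · have Ea : E n (c1 E n) := hc1 h1
      obtain ⟨IHa1, IHa2⟩ := IH _ Ea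
      have hLn : L E n = L E (c1 E n) := by
        rw [L_step hdeg (nonempty_iff_not_leaf.1 h1), if_neg hb, union_empty]
      have hent : ent E hwf n = ent E hwf (c1 E n) := by
        rw [ent_eq, dif_neg hb, dif_pos h1]
      have hent' : ent' E hwf n = ent' E hwf (c1 E n) := by
        rw [ent'_eq, dif_neg hb, dif_pos h1]
      have hwitn : wit E hwf n = wit E hwf (c1 E n) := by
        rw [wit_eq, dif_neg hb, dif_pos h1]
      refine ⟨?_, ?_⟩
      · rw [hent, hLn]; exact IHa1
      · intro hmn
        rw [hent', hwitn, hLn]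
        exact IHa2 (by rwa [many, hLn] at hmn)
    · have hleaf : IsLeafVert E n := not_not.1 (mt nonempty_iff_not_leaf.2 h1)
      have hent : ent E hwf n = (n, false) := by rw [ent_eq, dif_neg hb, dif_neg h1]
      have hwitn : wit E hwf n = n := by rw [wit_eq, dif_neg hb, dif_neg h1]
      have hLn : L E n = {n} := L_leaf hleaf
      refine ⟨?_, ?_⟩
      · rw [hent, hLn]
        have hnone : ∀ y, ¬ Fq E hwf (n, false) y := by
          rintro y ⟨hbn, -⟩; exact hb hbn
        rw [reach_none hnone, bijOn_singleton]
        simp [lab, hb, hwitn]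
      · intro hmn
        rw [many, hLn, Set.ncard_singleton] at hmn
        omega

lemma lab_leaf [Finite V] (hdeg : ∀ v : V, {w : V | E v w}.ncard ≤ 2) (x : V × Bool) :
    IsLeafVert E (lab E hwf x) := by
  rw [lab]
  split
  · exact (wit_mem hwf hdeg _).1
  · exact (wit_mem hwf hdeg _).1

lemma Fq_deg [Finite V] (x : V × Bool) : {y | Fq E hwf x y}.ncard ≤ 2 := by
  rcases x with ⟨xn, _ | _⟩
  · have hsub : {y | Fq E hwf (xn, false) y} ⊆
        {ent E hwf (c2 E xn), ent' E hwf (c1 E xn)} := by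
      rintro y ⟨-, h | ⟨-, h⟩⟩
      exacts [Or.inl h, Or.inr h]
    calc {y | Fq E hwf (xn, false) y}.ncard
        ≤ ({ent E hwf (c2 E xn), ent' E hwf (c1 E xn)} : Set (V × Bool)).ncard :=
          Set.ncard_le_ncard hsub (Set.toFinite _)
      _ ≤ 2 := (Set.ncard_insert_le _ _).trans (by simp)
  · have hsub : {y | Fq E hwf (xn, true) y} ⊆
        {ent' E hwf (c1 E xn), ent' E hwf (c2 E xn)} := by
      rintro y ⟨-, ⟨-, h⟩ | ⟨-, h⟩⟩
      exacts [Or.inl h, Or.inr h]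
    calc {y | Fq E hwf (xn, true) y}.ncard
        ≤ ({ent' E hwf (c1 E xn), ent' E hwf (c2 E xn)} : Set (V × Bool)).ncard :=
          Set.ncard_le_ncard hsub (Set.toFinite _)
      _ ≤ 2 := (Set.ncard_insert_le _ _).trans (by simp)

lemma Fq_multitree [Finite V] (hMT : IsMultitree E)
    (hdeg : ∀ v : V, {w : V | E v w}.ncard ≤ 2) : IsMultitree (Fq E hwf) := by
  refine multitree_of (Fq_acyc hwf hMT) ?_
  rintro ⟨xn, xb⟩ y1 y2 h1 h2 hne b hb1 hb2
  have mem1 : ∀ c : V, ReflTransGen (Fq E hwf) (ent E hwf c) b → lab E hwf b ∈ L E c :=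
    fun c h => (main hwf hMT hdeg c).1.mapsTo h
  have mem2 : ∀ c : V, many E c → ReflTransGen (Fq E hwf) (ent' E hwf c) b →
      lab E hwf b ∈ L E c :=
    fun c hm h => (((main hwf hMT hdeg c).2 hm).mapsTo h).1
  cases xb
  · obtain ⟨hbx, hy1⟩ := h1
    obtain ⟨-, hy2⟩ := h2
    have hdisj : Disjoint (L E (c1 E xn)) (L E (c2 E xn)) := L_disj hMT hbx
    rcases hy1 with rfl | ⟨hm1, rfl⟩ <;> rcases hy2 with rfl | ⟨hm2, rfl⟩
    · exact hne rfl
    · exact disjoint_left.1 hdisj (mem2 _ hm2 hb2) (mem1 _ hb1)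
    · exact disjoint_left.1 hdisj (mem2 _ hm1 hb1) (mem1 _ hb2)
    · exact hne rfl
  · obtain ⟨hbx, hy1⟩ := h1
    obtain ⟨-, hy2⟩ := h2
    have hdisj : Disjoint (L E (c1 E xn)) (L E (c2 E xn)) := L_disj hMT hbx
    rcases hy1 with ⟨hm1, rfl⟩ | ⟨hm1, rfl⟩ <;> rcases hy2 with ⟨hm2, rfl⟩ | ⟨hm2, rfl⟩
    · exact hne rfl
    · exact disjoint_left.1 hdisj (mem2 _ hm1 hb1) (mem2 _ hm2 hb2)
    · exact disjoint_left.1 hdisj (mem2 _ hm2 hb2) (mem2 _ hm1 hb1)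
    · exact hne rfl

end Constr



end MT

theorem stmt1 {V : Type} [Fintype V] (E : V → V → Prop) (hMT : IsMultitree E)
    (hdeg : ∀ v : V, {w : V | E v w}.ncard ≤ 2) :
    ∃ (m : ℕ) (F : Fin m → Fin m → Prop) (q : V → Fin m) (lab : Fin m → V),
      m ≤ 2 * Fintype.card V ∧
      IsMultitree F ∧
      (∀ w : Fin m, {w' : Fin m | F w w'}.ncard ≤ 2) ∧
      (∀ w : Fin m, IsLeafVert E (lab w)) ∧
      ∀ n : V, Set.BijOn lab {w : Fin m | Relation.ReflTransGen F (q n) w}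
        {v : V | IsLeafVert E v ∧ Relation.ReflTransGen E n v} := by
  classical
  have hwf : WellFounded (fun a b : V => E b a) := by
    have h1 : IsTrans V (Relation.TransGen fun a b : V => E b a) :=
      ⟨fun _ _ _ ha hb => ha.trans hb⟩
    have h2 : IsIrrefl V (Relation.TransGen fun a b : V => E b a) :=
      ⟨fun a ha => hMT.1 a (Relation.transGen_swap.mp ha)⟩
    have h3 : WellFounded (Relation.TransGen fun a b : V => E b a) :=
      @Finite.wellFounded_of_trans_of_irrefl _ _ _ h1 h2
    exact Subrelation.wf (r := Relation.TransGen fun a b : V => E b a)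
      (fun {x y} h => Relation.TransGen.single h) h3
  set m := 2 * Fintype.card V with hm
  have hcard : Fintype.card (V × Bool) = m := by simp [hm, mul_comm]
  let ee : Fin m ≃ V × Bool := (Fintype.equivFinOfCardEq hcard).symm
  refine ⟨m, fun i j => MT.Fq E hwf (ee i) (ee j), fun n => ee.symm (MT.ent E hwf n),
    fun i => MT.lab E hwf (ee i), le_refl _, MT.multitree_comap _ ee (MT.Fq_multitree hwf hMT hdeg),
    ?_, fun i => MT.lab_leaf hwf hdeg (ee i), ?_⟩
  · intro i
    have : {j | MT.Fq E hwf (ee i) (ee j)} = ee ⁻¹' {y | MT.Fq E hwf (ee i) y} := rfl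
    rw [this, MT.ncard_comap]
    exact MT.Fq_deg hwf (ee i)
  · intro n
    have hset : {w | Relation.ReflTransGen (fun i j => MT.Fq E hwf (ee i) (ee j))
        (ee.symm (MT.ent E hwf n)) w} =
        ee ⁻¹' {x | Relation.ReflTransGen (MT.Fq E hwf) (MT.ent E hwf n) x} := by
      ext w
      rw [Set.mem_setOf_eq, MT.rtg_comap (MT.Fq E hwf) ee]
      simp
    rw [hset]
    exact MT.bijOn_comap ee (MT.main hwf hMT hdeg n).1
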